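/- The dual of an M-embedded Banach space is L-embedded. -/

import Mathlib

open NormedSpace Filter Topology

/-- A sequence spans `ℓ¹` asymptotically isometrically. -/
def SpansL1Asymptotically {X : Type*} [NormedAddCommGroup X] [NormedSpace ℝ X]
    (x : ℕ → X) : Prop :=
  ∃ δ : ℕ → ℝ, (∀ n, 0 ≤ δ n ∧ δ n < 1) ∧ Tendsto δ atTop (nhds 0) ∧
    ∀ (N : ℕ) (α : ℕ → ℝ),
      (∑ n ∈ Finset.range N, (1 - δ n) * |α n|) ≤ ‖∑ n ∈ Finset.range N, α n • x n‖ ∧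
      ‖∑ n ∈ Finset.range N, α n • x n‖ ≤ ∑ n ∈ Finset.range N, |α n|

/-- A sequence spans `ℓ¹` almost isometrically. -/
def SpansL1AlmostIsometrically {X : Type*} [NormedAddCommGroup X] [NormedSpace ℝ X]
    (x : ℕ → X) : Prop :=
  ∃ δ : ℕ → ℝ, (∀ n, 0 ≤ δ n ∧ δ n < 1) ∧ Tendsto δ atTop (nhds 0) ∧
    ∀ (m M : ℕ) (α : ℕ → ℝ),
      (1 - δ m) * (∑ n ∈ Finset.Icc m M, |α n|) ≤ ‖∑ n ∈ Finset.Icc m M, α n • x n‖ ∧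
      ‖∑ n ∈ Finset.Icc m M, α n • x n‖ ≤ ∑ n ∈ Finset.Icc m M, |α n|

/-- A sequence spans `c₀` asymptotically isometrically. -/
def SpansC0Asymptotically {X : Type*} [NormedAddCommGroup X] [NormedSpace ℝ X]
    (z : ℕ → X) : Prop :=
  ∃ δ : ℕ → ℝ, (∀ n, 0 ≤ δ n ∧ δ n < 1) ∧ Tendsto δ atTop (nhds 0) ∧
    ∀ (N : ℕ) (hN : N ≠ 0) (α : ℕ → ℝ),
      ((Finset.range N).sup' (Finset.nonempty_range_iff.mpr hN)
          (fun n => (1 - δ n) * |α n|)) ≤ ‖∑ n ∈ Finset.range N, α n • z n‖ ∧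
      ‖∑ n ∈ Finset.range N, α n • z n‖ ≤
        (Finset.range N).sup' (Finset.nonempty_range_iff.mpr hN)
          (fun n => (1 + δ n) * |α n|)

/-- `P` is an L-projection: an idempotent bounded operator with
`‖ξ‖ = ‖Pξ‖ + ‖ξ - Pξ‖` for all `ξ`. -/
def IsLProjection {E : Type*} [NormedAddCommGroup E] [NormedSpace ℝ E]
    (P : E →L[ℝ] E) : Prop :=
  (∀ ξ, P (P ξ) = P ξ) ∧ ∀ ξ, ‖ξ‖ = ‖P ξ‖ + ‖ξ - P ξ‖

noncomputable instance instNACGStrongDualReal (E : Type*) [NormedAddCommGroup E] [NormedSpace ℝ E] :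
    NormedAddCommGroup (StrongDual ℝ E) := ContinuousLinearMap.toNormedAddCommGroup

noncomputable instance instNSStrongDualReal (E : Type*) [NormedAddCommGroup E] [NormedSpace ℝ E] :
    NormedSpace ℝ (StrongDual ℝ E) := ContinuousLinearMap.toNormedSpace

/-- `X` is L-embedded: the canonical image of `X` in its bidual is the range of an
L-projection. -/
def IsLEmbedded (X : Type*) [NormedAddCommGroup X] [NormedSpace ℝ X] : Prop :=
  ∃ P : StrongDual ℝ (StrongDual ℝ X) →L[ℝ] StrongDual ℝ (StrongDual ℝ X),
    (∀ ξ, P (P ξ) = P ξ) ∧ (∀ ξ, ‖ξ‖ = ‖P ξ‖ + ‖ξ - P ξ‖) ∧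
      Set.range P = Set.range (inclusionInDoubleDual ℝ X)

/-- `X` is M-embedded: the annihilator of `X` in `X'''` is the range of an
L-projection on `X'''`. -/
def IsMEmbedded (X : Type*) [NormedAddCommGroup X] [NormedSpace ℝ X] : Prop :=
  ∃ P : StrongDual ℝ (StrongDual ℝ (StrongDual ℝ X)) →L[ℝ] StrongDual ℝ (StrongDual ℝ (StrongDual ℝ X)),
    (∀ φ, P (P φ) = P φ) ∧ (∀ φ, ‖φ‖ = ‖P φ‖ + ‖φ - P φ‖) ∧
      Set.range P = {φ | ∀ x : X, φ (inclusionInDoubleDual ℝ X x) = 0}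

/-- `X` fails the fixed point property: there are a nonempty closed bounded convex set and
a contractive self-map without fixed point. -/
def FailsFPP (X : Type*) [NormedAddCommGroup X] [NormedSpace ℝ X] : Prop :=
  ∃ C : Set X, C.Nonempty ∧ IsClosed C ∧ Bornology.IsBounded C ∧ Convex ℝ C ∧
    ∃ f : X → X, Set.MapsTo f C C ∧
      (∀ x ∈ C, ∀ y ∈ C, x ≠ y → ‖f x - f y‖ < ‖x - y‖) ∧
      ∀ x ∈ C, f x ≠ x

theorem stmt18 {X : Type*} [NormedAddCommGroup X] [NormedSpace ℝ X] [CompleteSpace X] (hX : IsMEmbedded X) : IsLEmbedded (StrongDual ℝ X) := by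
  obtain ⟨P, hP2, hPnorm, hPrange⟩ := hX
  have hPmem : ∀ ξ, ∀ x : X, (P ξ) (inclusionInDoubleDual ℝ X x) = 0 := by
    intro ξ x
    have : P ξ ∈ {φ : StrongDual ℝ (StrongDual ℝ (StrongDual ℝ X)) |
        ∀ x : X, φ (inclusionInDoubleDual ℝ X x) = 0} := by
      rw [← hPrange]; exact ⟨ξ, rfl⟩
    exact this x
  have key : ∀ ψ : StrongDual ℝ X, P (inclusionInDoubleDual ℝ (StrongDual ℝ X) ψ) = 0 := by
    intro ψ
    set φ := inclusionInDoubleDual ℝ (StrongDual ℝ X) ψ with hφ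
    have happ : ∀ x : X, (φ - P φ) (inclusionInDoubleDual ℝ X x) = ψ x := by
      intro x
      simp [hφ, hPmem, dual_def]
    have hψle : ‖ψ‖ ≤ ‖φ - P φ‖ := by
      apply ContinuousLinearMap.opNorm_le_bound _ (ContinuousLinearMap.opNorm_nonneg _)
      intro x
      calc ‖ψ x‖ = ‖(φ - P φ) (inclusionInDoubleDual ℝ X x)‖ := by rw [happ]
        _ ≤ ‖φ - P φ‖ * ‖inclusionInDoubleDual ℝ X x‖ :=
            ContinuousLinearMap.le_opNorm _ _
        _ = ‖φ - P φ‖ * ‖x‖ := by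
            have hiso : ‖inclusionInDoubleDual ℝ X x‖ = ‖x‖ :=
              (inclusionInDoubleDualLi ℝ (E := X)).norm_map x
            rw [hiso]
    have hφnorm : ‖φ‖ = ‖ψ‖ := (inclusionInDoubleDualLi ℝ (E := StrongDual ℝ X)).norm_map ψ

    have h := hPnorm φ
    have hP0 : ‖P φ‖ ≤ 0 := by linarith
    have h0 : ‖P φ‖ = 0 := le_antisymm hP0 (ContinuousLinearMap.opNorm_nonneg _)
    ext Ξ
    have hle := (P φ).le_opNorm Ξ
    rw [h0, zero_mul] at hle
    simpa using norm_le_zero_iff.mp hle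
  haveI hTG : IsTopologicalAddGroup (StrongDual ℝ (StrongDual ℝ (StrongDual ℝ X))) := inferInstance
  haveI : ContinuousAdd (StrongDual ℝ (StrongDual ℝ (StrongDual ℝ X))) := hTG.toContinuousAdd
  have hQ : ∀ ξ, (@Sub.sub _ (ContinuousLinearMap.sub (σ₁₂ := RingHom.id ℝ) (M := (StrongDual ℝ (StrongDual ℝ (StrongDual ℝ X)))) (M₂ := (StrongDual ℝ (StrongDual ℝ (StrongDual ℝ X)))))
      (ContinuousLinearMap.id ℝ (StrongDual ℝ (StrongDual ℝ (StrongDual ℝ X)))) P) ξ = ξ - P ξ := fun ξ => rfl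
  refine ⟨@Sub.sub _ (ContinuousLinearMap.sub (σ₁₂ := RingHom.id ℝ) (M := (StrongDual ℝ (StrongDual ℝ (StrongDual ℝ X)))) (M₂ := (StrongDual ℝ (StrongDual ℝ (StrongDual ℝ X)))))
      (ContinuousLinearMap.id ℝ (StrongDual ℝ (StrongDual ℝ (StrongDual ℝ X)))) P, ?_, ?_, ?_⟩
  · intro ξ
    rw [hQ, hQ, map_sub P, hP2]
    abel
  · intro ξ
    have h := hPnorm ξ
    rw [hQ, sub_sub_cancel]
    linarith [norm_sub_rev ξ (P ξ)]
  · apply Set.Subset.antisymm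
    · rintro _ ⟨φ, rfl⟩
      set ψ : StrongDual ℝ X := (φ - P φ).comp (inclusionInDoubleDual ℝ X) with hψ
      refine ⟨ψ, ?_⟩
      set r := (φ - P φ) - inclusionInDoubleDual ℝ (StrongDual ℝ X) ψ with hr
      have hrann : ∀ x : X, r (inclusionInDoubleDual ℝ X x) = 0 := by
        intro x
        simp [hr, hψ, dual_def]
      have hrmem : r ∈ Set.range P := by rw [hPrange]; exact hrann
      obtain ⟨s, hs⟩ := hrmem
      have hPr : P r = r := by rw [← hs, hP2]
      have hPq : P (φ - P φ) = 0 := by rw [map_sub P, hP2, sub_self]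
      have hr0 : r = 0 := by
        have h2 : P r = P (φ - P φ) - P (inclusionInDoubleDual ℝ (StrongDual ℝ X) ψ) := by
          rw [hr, map_sub P]
        rw [hPr, hPq, key] at h2
        exact h2.trans (sub_self (0 : StrongDual ℝ (StrongDual ℝ (StrongDual ℝ X))))
      have heq : inclusionInDoubleDual ℝ (StrongDual ℝ X) ψ = φ - P φ :=
        (sub_eq_zero.mp hr0).symm
      rw [hQ]; exact heq
    · rintro _ ⟨ψ, rfl⟩
      refine ⟨inclusionInDoubleDual ℝ (StrongDual ℝ X) ψ, ?_⟩
      rw [hQ, key ψ]; exact sub_zero _
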